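/- For every real parameter a with a > 2, the dimensionless energy-to-pressure ratio r(γ, a) tends to a + 1 as γ → 0⁺; that is, lim_{γ→0⁺} (∫_γ^∞ (K₃(s) − K₂(s)/s)(s − γ)^a ds) / (∫_γ^∞ (K₂(s)/s)(s − γ)^a ds) = a + 1. -/

import Mathlib

open MeasureTheory Real Filter Set

/-- Modified Bessel function of the second kind, integral representation. -/
noncomputable def besselK (n : ℕ) (x : ℝ) : ℝ :=
  ∫ t in Set.Ioi (0 : ℝ), Real.exp (-x * Real.cosh t) * Real.cosh (n * t)

/-- Dimensionless energy-to-pressure ratio `r(γ, a) = e/p` of a relativistic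
gas with internal structure, state-density measure `φ(I) = I^a`. -/
noncomputable def rRatio (γ a : ℝ) : ℝ :=
  (∫ s in Set.Ioi γ, (besselK 3 s - besselK 2 s / s) * (s - γ) ^ a) /
  (∫ s in Set.Ioi γ, (besselK 2 s / s) * (s - γ) ^ a)

open Topology

lemma cosh_quad_lb (t : ℝ) (ht : 0 ≤ t) : 1 + t^2/2 ≤ Real.cosh t := by
  have h1 : Real.cosh t = 2 * Real.sinh (t/2)^2 + 1 := by
    have := Real.cosh_two_mul (t/2)
    have h2 := Real.cosh_sq (t/2)
    rw [show 2*(t/2) = t by ring] at this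
    nlinarith
  have h3 : t/2 ≤ Real.sinh (t/2) := Real.self_le_sinh_iff.mpr (by linarith)
  nlinarith

lemma cosh_mul_le_exp (c t : ℝ) (ht : 0 ≤ t) (hc : 0 ≤ c) : Real.cosh (c*t) ≤ Real.exp (c*t) := by
  rw [Real.cosh_eq]
  have := Real.exp_le_exp.mpr (show -(c*t) ≤ c*t by nlinarith)
  linarith

lemma gaussian_type_integrable (b c : ℝ) (hb : 0 < b) :
    Integrable (fun t : ℝ => Real.exp (-b * t ^ 2 + c * t)) := by
  have h : ∀ t:ℝ, -b*t^2 + c*t = -b*(t - c/(2*b))^2 + c^2/(4*b) := by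
    intro t; field_simp; ring
  have : (fun t : ℝ => Real.exp (-b * t ^ 2 + c * t))
      = fun t : ℝ => Real.exp (-b * (t - c/(2*b)) ^ 2) * Real.exp (c^2/(4*b)) := by
    funext t; rw [← Real.exp_add, ← h t]
  rw [this]
  exact ((integrable_exp_neg_mul_sq hb).comp_sub_right (c/(2*b))).mul_const _

lemma master_integrable (b c : ℝ) (hb : 0 < b) :
    IntegrableOn (fun t : ℝ => Real.exp (-b * Real.cosh t + c * t)) (Set.Ioi 0) := by
  apply Integrable.mono' (g := fun t => Real.exp (-b) * Real.exp (-(b/2) * t^2 + c*t))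
  · exact (((gaussian_type_integrable (b/2) c (by linarith)).const_mul _)).integrableOn
  · exact (Real.continuous_exp.comp (by continuity)).aestronglyMeasurable
  · filter_upwards [self_mem_ae_restrict measurableSet_Ioi] with t ht
    rw [Real.norm_eq_abs, abs_of_pos (Real.exp_pos _), ← Real.exp_add]
    apply Real.exp_le_exp.mpr
    have := cosh_quad_lb t (le_of_lt ht)
    nlinarith

lemma cosh_pos' (x : ℝ) : 0 < Real.cosh x := Real.cosh_pos _

lemma besselK_integrand_integrable (n : ℕ) {x : ℝ} (hx : 0 < x) :
    IntegrableOn (fun t : ℝ => Real.exp (-x * Real.cosh t) * Real.cosh (n * t))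
      (Set.Ioi 0) := by
  apply Integrable.mono' (g := fun t => Real.exp (-x * Real.cosh t + n * t))
  · exact master_integrable x n hx
  · exact (by continuity : Continuous fun t : ℝ => Real.exp (-x * Real.cosh t) * Real.cosh (n*t)).aestronglyMeasurable
  · filter_upwards [self_mem_ae_restrict measurableSet_Ioi] with t ht
    rw [Real.norm_eq_abs, abs_of_pos (by positivity), Real.exp_add]
    have h1 := cosh_mul_le_exp n t (le_of_lt ht) n.cast_nonneg
    have h2 := Real.exp_pos (-x * Real.cosh t)
    nlinarith

lemma besselK_pos (n : ℕ) {x : ℝ} (hx : 0 < x) : 0 < besselK n x := by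
  rw [besselK, setIntegral_pos_iff_support_of_nonneg_ae]
  · have : Function.support (fun t : ℝ => Real.exp (-x * Real.cosh t) * Real.cosh (n * t)) = Set.univ := by
      ext t; simp [Function.mem_support]
      positivity
    rw [this, Set.univ_inter]
    simp [Real.volume_Ioi]
  · filter_upwards with t; positivity
  · exact besselK_integrand_integrable n hx

lemma besselK_antitone (n : ℕ) {x y : ℝ} (hx : 0 < x) (hxy : x ≤ y) :
    besselK n y ≤ besselK n x := by
  apply setIntegral_mono_on (besselK_integrand_integrable n (lt_of_lt_of_le hx hxy))
    (besselK_integrand_integrable n hx) measurableSet_Ioi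
  intro t _
  have h1 : 0 < Real.cosh (n * t) := Real.cosh_pos _
  have : Real.exp (-y * Real.cosh t) ≤ Real.exp (-x * Real.cosh t) := by
    apply Real.exp_le_exp.mpr
    have := Real.one_le_cosh t
    nlinarith
  nlinarith

lemma besselK_le_exp_mul (n : ℕ) {x : ℝ} (hx : 0 < x) :
    besselK n x ≤ Real.exp (-(x / 2)) * besselK n (x / 2) := by
  rw [besselK, besselK, ← integral_const_mul]
  apply setIntegral_mono_on (besselK_integrand_integrable n hx)
    (((besselK_integrand_integrable n (by linarith : (0:ℝ) < x/2)).const_mul _)) measurableSet_Ioi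
  intro t _
  have h1 : 0 < Real.cosh (n * t) := Real.cosh_pos _
  have h2 : Real.exp (-x * Real.cosh t) ≤ Real.exp (-(x/2)) * Real.exp (-(x/2) * Real.cosh t) := by
    rw [← Real.exp_add]
    apply Real.exp_le_exp.mpr
    have := Real.one_le_cosh t
    nlinarith
  nlinarith [Real.exp_pos (-(x/2) * Real.cosh t)]

lemma besselK_mono_ord {m n : ℕ} (hmn : m ≤ n) {x : ℝ} (hx : 0 < x) :
    besselK m x ≤ besselK n x := by
  apply setIntegral_mono_on (besselK_integrand_integrable m hx)
    (besselK_integrand_integrable n hx) measurableSet_Ioi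
  intro t ht
  have h2 : Real.cosh (m * t) ≤ Real.cosh (n * t) := by
    apply Real.cosh_le_cosh.mpr
    have ht' : 0 ≤ t := le_of_lt (Set.mem_Ioi.mp ht)
    have hm : (0:ℝ) ≤ m * t := by positivity
    have hn : (0:ℝ) ≤ n * t := by positivity
    rw [abs_of_nonneg hm, abs_of_nonneg hn]
    have : (m:ℝ) ≤ n := by exact_mod_cast hmn
    nlinarith
  nlinarith [Real.exp_pos (-x * Real.cosh t)]

lemma half_exp_le_cosh (t : ℝ) : Real.exp t / 2 ≤ Real.cosh t := by
  rw [Real.cosh_eq]; have := (Real.exp_pos (-t)).le; linarith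

lemma besselK_two_bound {x : ℝ} (hx : 0 < x) :
    besselK 2 x ≤ 2 / x + 4 / x ^ 2 := by
  have hx' : x ≠ 0 := ne_of_gt hx
  set G : ℝ → ℝ := fun t => -(Real.exp (-(x/2) * Real.exp t) * ((2/x) * Real.exp t + 4/x^2))
    with hGdef
  have hG : ∀ t : ℝ, HasDerivAt G (Real.exp (-(x/2) * Real.exp t) * Real.exp (2*t)) t := by
    intro t
    have h1 : HasDerivAt (fun t : ℝ => -(x/2) * Real.exp t) (-(x/2) * Real.exp t) t :=
      (Real.hasDerivAt_exp t).const_mul _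
    have h2 := h1.exp
    have h3 : HasDerivAt (fun t : ℝ => (2/x) * Real.exp t + 4/x^2) ((2/x) * Real.exp t) t :=
      ((Real.hasDerivAt_exp t).const_mul _).add_const _
    have h4 := (h2.mul h3).neg
    refine h4.congr_deriv ?_
    symm
    rw [show (2:ℝ)*t = t + t by ring, Real.exp_add]
    field_simp
    ring
  have hG'int : IntegrableOn (fun t => Real.exp (-(x/2) * Real.exp t) * Real.exp (2*t))
      (Set.Ioi 0) := by
    apply Integrable.mono' (master_integrable (x/2) 2 (by linarith))
    · exact (by continuity : Continuous fun t : ℝ =>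
        Real.exp (-(x/2) * Real.exp t) * Real.exp (2*t)).aestronglyMeasurable
    · filter_upwards [self_mem_ae_restrict measurableSet_Ioi] with t ht
      have ht' : (0:ℝ) ≤ t := le_of_lt ht
      rw [Real.norm_eq_abs, abs_of_pos (by positivity), ← Real.exp_add]
      apply Real.exp_le_exp.mpr
      have h5 : Real.cosh t ≤ Real.exp t := by
        rw [Real.cosh_eq]
        have := Real.exp_le_exp.mpr (show -t ≤ t by linarith)
        linarith
      nlinarith
  have hGtop : Tendsto G atTop (𝓝 0) := by
    have h1 : Tendsto (fun u : ℝ => u * Real.exp (-(x/2) * u)) atTop (𝓝 0) := by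
      have := tendsto_rpow_mul_exp_neg_mul_atTop_nhds_zero 1 (x/2) (by linarith)
      apply this.congr'
      filter_upwards [eventually_gt_atTop (0:ℝ)] with u hu
      rw [Real.rpow_one]
    have h2 : Tendsto (fun u : ℝ => Real.exp (-(x/2) * u)) atTop (𝓝 0) := by
      have := tendsto_rpow_mul_exp_neg_mul_atTop_nhds_zero 0 (x/2) (by linarith)
      apply this.congr'
      filter_upwards [eventually_gt_atTop (0:ℝ)] with u hu
      rw [Real.rpow_zero, one_mul]
    have h3 : Tendsto (fun u : ℝ => -((2/x) * (u * Real.exp (-(x/2) * u))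
        + (4/x^2) * Real.exp (-(x/2) * u))) atTop (𝓝 0) := by
      simpa using ((h1.const_mul (2/x)).add (h2.const_mul (4/x^2))).neg
    have h4 := h3.comp Real.tendsto_exp_atTop
    apply h4.congr
    intro t
    simp only [Function.comp, hGdef]
    ring
  have key : ∫ t in Set.Ioi (0:ℝ), Real.exp (-(x/2) * Real.exp t) * Real.exp (2*t)
      = 0 - G 0 :=
    integral_Ioi_of_hasDerivAt_of_tendsto (hG 0).continuousAt.continuousWithinAt
      (fun t _ => hG t) hG'int hGtop
  have hG0 : 0 - G 0 = Real.exp (-(x/2)) * (2/x + 4/x^2) := by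
    simp only [hGdef, Real.exp_zero, mul_one]
    ring
  have step1 : besselK 2 x ≤ ∫ t in Set.Ioi (0:ℝ),
      Real.exp (-(x/2) * Real.exp t) * Real.exp (2*t) := by
    rw [besselK]
    apply setIntegral_mono_on (besselK_integrand_integrable 2 hx) hG'int measurableSet_Ioi
    intro t ht
    have ht' : 0 ≤ t := le_of_lt (Set.mem_Ioi.mp ht)
    have h5 := half_exp_le_cosh t
    have h6 : Real.cosh ((2:ℕ) * t) ≤ Real.exp (2*t) := by
      have := cosh_mul_le_exp 2 t ht' (by norm_num)
      push_cast at this ⊢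
      exact this
    have h7 : Real.exp (-x * Real.cosh t) ≤ Real.exp (-(x/2) * Real.exp t) := by
      apply Real.exp_le_exp.mpr; nlinarith
    have h8 : (0:ℝ) < Real.cosh ((2:ℕ) * t) := Real.cosh_pos _
    exact mul_le_mul h7 h6 h8.le (Real.exp_pos _).le
  have hexp1 : Real.exp (-(x/2)) ≤ 1 := Real.exp_le_one_iff.mpr (by linarith)
  have hpos : (0:ℝ) ≤ 2/x + 4/x^2 := by positivity
  calc besselK 2 x ≤ Real.exp (-(x/2)) * (2/x + 4/x^2) := by rw [← hG0, ← key]; exact step1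
    _ ≤ 1 * (2/x + 4/x^2) := mul_le_mul_of_nonneg_right hexp1 hpos
    _ = 2/x + 4/x^2 := one_mul _

lemma besselK_hasDerivAt (n : ℕ) {x : ℝ} (hx : 0 < x) :
    HasDerivAt (besselK n)
      (-∫ t in Set.Ioi (0 : ℝ),
        Real.cosh t * (Real.exp (-x * Real.cosh t) * Real.cosh (n * t))) x := by
  set μ := volume.restrict (Set.Ioi (0:ℝ))
  set F : ℝ → ℝ → ℝ := fun y t => Real.exp (-y * Real.cosh t) * Real.cosh (n * t) with hF
  set F' : ℝ → ℝ → ℝ := fun y t => -(Real.cosh t * (Real.exp (-y * Real.cosh t) * Real.cosh (n * t)))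
    with hF'
  have key : Integrable (F' x) μ ∧
      HasDerivAt (fun y => ∫ t, F y t ∂μ) (∫ t, F' x t ∂μ) x := by
    apply hasDerivAt_integral_of_dominated_loc_of_deriv_le (s := Metric.ball x (x/2)) (Metric.ball_mem_nhds x (by linarith))
      (bound := fun t => Real.cosh t * (Real.exp (-(x/2) * Real.cosh t) * Real.cosh (n * t)))
    · filter_upwards with y
      exact (by continuity : Continuous fun t : ℝ => Real.exp (-y * Real.cosh t)
        * Real.cosh (n * t)).aestronglyMeasurable
    · exact besselK_integrand_integrable n hx
    · exact (by continuity : Continuous fun t : ℝ =>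
        -(Real.cosh t * (Real.exp (-x * Real.cosh t) * Real.cosh (n * t)))).aestronglyMeasurable
    · filter_upwards with t
      intro y hy
      rw [Metric.mem_ball, Real.dist_eq] at hy
      have h1 : x/2 ≤ y := by cases abs_lt.mp hy; linarith
      have hc := Real.cosh_pos t
      have hcn := Real.cosh_pos ((n:ℝ) * t)
      rw [Real.norm_eq_abs, abs_neg, abs_of_pos (by positivity)]
      have h2 : Real.exp (-y * Real.cosh t) ≤ Real.exp (-(x/2) * Real.cosh t) := by
        apply Real.exp_le_exp.mpr; nlinarith
      exact mul_le_mul_of_nonneg_left (mul_le_mul_of_nonneg_right h2 hcn.le) hc.le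
    · apply Integrable.mono' (master_integrable (x/4) (n+1) (by linarith))
      · exact (by continuity : Continuous fun t : ℝ =>
          Real.cosh t * (Real.exp (-(x/2) * Real.cosh t) * Real.cosh (n * t))).aestronglyMeasurable
      · filter_upwards [self_mem_ae_restrict measurableSet_Ioi] with t ht
        have ht' : (0:ℝ) ≤ t := le_of_lt ht
        have hc := Real.cosh_pos t
        have hcn := Real.cosh_pos ((n:ℝ) * t)
        rw [Real.norm_eq_abs, abs_of_pos (by positivity)]
        have h5 : Real.cosh t ≤ Real.exp t := by
          rw [Real.cosh_eq]
          have := Real.exp_le_exp.mpr (show -t ≤ t by linarith)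
          linarith
        have h6 : Real.cosh ((n:ℝ) * t) ≤ Real.exp (n * t) :=
          cosh_mul_le_exp n t ht' n.cast_nonneg
        have h7 : Real.exp t * Real.exp ((n:ℝ)*t) = Real.exp (((n:ℝ)+1) * t) := by
          rw [← Real.exp_add]; ring_nf
        have h8 : Real.exp (-(x/2) * Real.cosh t) ≤
            Real.exp (-(x/4) * Real.cosh t) * Real.exp (-(x/4) * Real.cosh t) := by
          rw [← Real.exp_add]; apply Real.exp_le_exp.mpr; nlinarith
        have h9 : Real.exp t * Real.exp (-(x/4) * Real.cosh t) ≤ Real.exp t := by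
          nlinarith [Real.exp_le_one_iff.mpr (show -(x/4) * Real.cosh t ≤ 0 by nlinarith),
            Real.exp_pos t]
        -- goal: cosh t * (exp(-(x/2) cosh t) * cosh(nt)) ≤ exp(-(x/4) cosh t + (n+1) t)
        calc Real.cosh t * (Real.exp (-(x/2) * Real.cosh t) * Real.cosh ((n:ℝ) * t))
            ≤ Real.exp t * (Real.exp (-(x/2) * Real.cosh t) * Real.exp ((n:ℝ) * t)) := by
              apply mul_le_mul h5 _ (by positivity) (Real.exp_pos t).le
              exact mul_le_mul_of_nonneg_left h6 (Real.exp_pos _).le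
          _ ≤ Real.exp (-(x/4) * Real.cosh t) * Real.exp (((n:ℝ)+1) * t) := by
              rw [← h7]
              calc Real.exp t * (Real.exp (-(x/2) * Real.cosh t) * Real.exp ((n:ℝ) * t))
                  ≤ Real.exp t * ((Real.exp (-(x/4) * Real.cosh t) * Real.exp (-(x/4) * Real.cosh t)) * Real.exp ((n:ℝ) * t)) := by
                    apply mul_le_mul_of_nonneg_left _ (Real.exp_pos t).le
                    exact mul_le_mul_of_nonneg_right h8 (Real.exp_pos _).le
                _ = (Real.exp t * Real.exp (-(x/4) * Real.cosh t)) * (Real.exp (-(x/4) * Real.cosh t) * Real.exp ((n:ℝ)*t)) := by ring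
                _ ≤ Real.exp t * (Real.exp (-(x/4) * Real.cosh t) * Real.exp ((n:ℝ)*t)) := by
                    apply mul_le_mul_of_nonneg_right h9 (by positivity)
                _ = Real.exp (-(x/4) * Real.cosh t) * (Real.exp t * Real.exp ((n:ℝ)*t)) := by ring
          _ = Real.exp (-(x/4) * Real.cosh t + ((n:ℝ)+1) * t) := by rw [← Real.exp_add]
    · filter_upwards with t
      intro y _
      have h1 : HasDerivAt (fun y : ℝ => -y * Real.cosh t) (-Real.cosh t) y := by
        simpa using (hasDerivAt_id y).neg.mul_const (Real.cosh t)
      have h2 := (h1.exp).mul_const (Real.cosh ((n:ℝ) * t))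
      refine h2.congr_deriv ?_
      symm
      ring
  have h3 := key.2
  have : (fun y => ∫ t, F y t ∂μ) = besselK n := by
    funext y; rw [besselK]
  rw [this] at h3
  convert h3 using 1
  rw [← integral_neg]

lemma besselK_one_eq {x : ℝ} : besselK 1 x
    = ∫ t in Set.Ioi (0:ℝ), Real.exp (-x * Real.cosh t) * Real.cosh t := by
  rw [besselK]; push_cast; simp

lemma besselK_two_eq {x : ℝ} : besselK 2 x
    = ∫ t in Set.Ioi (0:ℝ), Real.exp (-x * Real.cosh t) * Real.cosh (2*t) := by
  rw [besselK]; push_cast; ring_nf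

lemma besselK_three_eq {x : ℝ} : besselK 3 x
    = ∫ t in Set.Ioi (0:ℝ), Real.exp (-x * Real.cosh t) * Real.cosh (3*t) := by
  rw [besselK]; push_cast; ring_nf

lemma integ1 {x : ℝ} (hx : 0 < x) :
    IntegrableOn (fun t => Real.exp (-x * Real.cosh t) * Real.cosh t) (Set.Ioi 0) := by
  have := besselK_integrand_integrable 1 hx; push_cast at this; simpa using this

lemma integ2 {x : ℝ} (hx : 0 < x) :
    IntegrableOn (fun t => Real.exp (-x * Real.cosh t) * Real.cosh (2*t)) (Set.Ioi 0) := by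
  have := besselK_integrand_integrable 2 hx; push_cast at this; simpa using this

lemma integ3 {x : ℝ} (hx : 0 < x) :
    IntegrableOn (fun t => Real.exp (-x * Real.cosh t) * Real.cosh (3*t)) (Set.Ioi 0) := by
  have := besselK_integrand_integrable 3 hx; push_cast at this; simpa using this

lemma sinh_mul_sinh_two (t : ℝ) :
    Real.sinh t * Real.sinh (2*t) = (Real.cosh (3*t) - Real.cosh t) / 2 := by
  have h1 := Real.cosh_add (2*t) t
  have h2 := Real.cosh_sub (2*t) t
  rw [show 2*t + t = 3*t by ring] at h1
  rw [show 2*t - t = t by ring] at h2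
  linarith

lemma cosh_mul_cosh_two (t : ℝ) :
    Real.cosh t * Real.cosh (2*t) = (Real.cosh (3*t) + Real.cosh t) / 2 := by
  have h1 := Real.cosh_add (2*t) t
  have h2 := Real.cosh_sub (2*t) t
  rw [show 2*t + t = 3*t by ring] at h1
  rw [show 2*t - t = t by ring] at h2
  linarith

lemma besselK_recurrence {x : ℝ} (hx : 0 < x) :
    x * besselK 3 x = x * besselK 1 x + 4 * besselK 2 x := by
  set g : ℝ → ℝ := fun t => Real.exp (-x * Real.cosh t) * Real.sinh (2*t) with hgdef
  set g' : ℝ → ℝ := fun t => Real.exp (-x * Real.cosh t) *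
    (-x * Real.sinh t * Real.sinh (2*t) + 2 * Real.cosh (2*t)) with hg'def
  have hg : ∀ t : ℝ, HasDerivAt g (g' t) t := by
    intro t
    have h1 : HasDerivAt (fun t : ℝ => -x * Real.cosh t) (-x * Real.sinh t) t :=
      (Real.hasDerivAt_cosh t).const_mul (-x)
    have h2 := h1.exp
    have hinner : HasDerivAt (fun t : ℝ => 2*t) 2 t := by
      simpa using (hasDerivAt_id t).const_mul 2
    have h3 : HasDerivAt (fun t : ℝ => Real.sinh (2*t)) (Real.cosh (2*t) * 2) t := by
      exact (Real.hasDerivAt_sinh (2*t)).comp t hinner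
    have h4 := h2.mul h3
    refine h4.congr_deriv ?_
    symm
    simp only [hg'def]
    ring
  have hcoshexp : ∀ t : ℝ, 0 ≤ t → Real.cosh t ≤ Real.exp t := by
    intro t ht
    rw [Real.cosh_eq]
    have := Real.exp_le_exp.mpr (show -t ≤ t by linarith)
    linarith
  have habs : ∀ t : ℝ, 0 ≤ t → |Real.sinh t| ≤ Real.exp t := by
    intro t ht
    rw [abs_of_nonneg (Real.sinh_nonneg_iff.mpr ht)]
    have := Real.sinh_lt_cosh (x := t)
    have := hcoshexp t ht
    linarith
  have hint : IntegrableOn g' (Set.Ioi 0) := by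
    apply Integrable.mono' ((master_integrable x 3 hx).const_mul (x + 2))
    · exact ((by continuity : Continuous g')).aestronglyMeasurable
    · filter_upwards [self_mem_ae_restrict measurableSet_Ioi] with t ht
      have ht' : (0:ℝ) ≤ t := le_of_lt ht
      have e1 := habs t ht'
      have e2 := habs (2*t) (by linarith)
      have e3 : Real.cosh (2*t) ≤ Real.exp (2*t) := hcoshexp (2*t) (by linarith)
      have e4 : Real.exp t * Real.exp (2*t) = Real.exp (3*t) := by
        rw [← Real.exp_add]; ring_nf
      have epos := Real.exp_pos (-x * Real.cosh t)
      have e2pos := Real.exp_pos (2*t)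
      have e1pos := Real.exp_pos t
      rw [Real.norm_eq_abs, hg'def, abs_mul, abs_of_pos epos]
      have e5 : |(-x * Real.sinh t * Real.sinh (2*t) + 2 * Real.cosh (2*t))|
          ≤ (x+2) * Real.exp (3*t) := by
        have e6 : |(-x * Real.sinh t * Real.sinh (2*t))| ≤ x * Real.exp (3*t) := by
          rw [abs_mul, abs_mul, abs_neg, abs_of_pos hx]
          calc x * |Real.sinh t| * |Real.sinh (2*t)| ≤ x * Real.exp t * Real.exp (2*t) := by
                apply mul_le_mul _ e2 (abs_nonneg _) (by positivity)
                exact mul_le_mul_of_nonneg_left e1 hx.le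
            _ = x * Real.exp (3*t) := by rw [mul_assoc, e4]
        have e7 : |2 * Real.cosh (2*t)| ≤ 2 * Real.exp (3*t) := by
          rw [abs_mul, abs_of_nonneg (by norm_num : (0:ℝ) ≤ 2),
            abs_of_pos (Real.cosh_pos _)]
          have : Real.exp (2*t) ≤ Real.exp (3*t) := Real.exp_le_exp.mpr (by linarith)
          linarith
        calc |(-x * Real.sinh t * Real.sinh (2*t) + 2 * Real.cosh (2*t))|
            ≤ |(-x * Real.sinh t * Real.sinh (2*t))| + |2 * Real.cosh (2*t)| := abs_add_le _ _
          _ ≤ x * Real.exp (3*t) + 2 * Real.exp (3*t) := add_le_add e6 e7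
          _ = (x+2) * Real.exp (3*t) := by ring
      calc Real.exp (-x * Real.cosh t) * |(-x * Real.sinh t * Real.sinh (2*t) + 2 * Real.cosh (2*t))|
          ≤ Real.exp (-x * Real.cosh t) * ((x+2) * Real.exp (3*t)) :=
            mul_le_mul_of_nonneg_left e5 epos.le
        _ = (x+2) * Real.exp (-x * Real.cosh t + 3*t) := by rw [Real.exp_add]; ring
  have htop : Tendsto g atTop (𝓝 0) := by
    have hb : (0:ℝ) < x/2 := by linarith
    have h1 := (tendsto_rpow_mul_exp_neg_mul_atTop_nhds_zero 2 (x/2) hb).comp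
      Real.tendsto_exp_atTop
    apply squeeze_zero_norm' _ h1
    filter_upwards [eventually_ge_atTop (0:ℝ)] with t ht
    have e2 : |Real.sinh (2*t)| ≤ Real.exp (2*t) := habs (2*t) (by linarith)
    have e3 : Real.exp t / 2 ≤ Real.cosh t := half_exp_le_cosh t
    simp only [Function.comp, hgdef]
    rw [Real.norm_eq_abs, abs_mul, abs_of_pos (Real.exp_pos _)]
    have e4 : Real.exp t ^ (2:ℝ) = Real.exp (2*t) := by
      rw [← Real.exp_mul]; ring_nf
    calc Real.exp (-x * Real.cosh t) * |Real.sinh (2*t)|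
        ≤ Real.exp (-(x/2) * Real.exp t) * Real.exp (2*t) := by
          apply mul_le_mul _ e2 (abs_nonneg _) (Real.exp_pos _).le
          apply Real.exp_le_exp.mpr; nlinarith
      _ = Real.exp t ^ (2:ℝ) * Real.exp (-(x/2) * Real.exp t) := by rw [e4]; ring
  have h0 : ∫ t in Set.Ioi (0:ℝ), g' t = 0 - g 0 :=
    integral_Ioi_of_hasDerivAt_of_tendsto (hg 0).continuousAt.continuousWithinAt
      (fun t _ => hg t) hint htop
  have hg0 : g 0 = 0 := by simp [hgdef]
  have hsplit : ∫ t in Set.Ioi (0:ℝ), g' t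
      = (-(x/2)) * besselK 3 x + ((x/2) * besselK 1 x + 2 * besselK 2 x) := by
    have heq : ∀ t : ℝ, g' t
        = (-(x/2)) * (Real.exp (-x * Real.cosh t) * Real.cosh (3*t))
          + ((x/2) * (Real.exp (-x * Real.cosh t) * Real.cosh t)
            + 2 * (Real.exp (-x * Real.cosh t) * Real.cosh (2*t))) := by
      intro t
      have := sinh_mul_sinh_two t
      simp only [hg'def]
      linear_combination (-x * Real.exp (-x * Real.cosh t)) * this
    rw [show (∫ t in Set.Ioi (0:ℝ), g' t) = ∫ t in Set.Ioi (0:ℝ),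
        ((-(x/2)) * (Real.exp (-x * Real.cosh t) * Real.cosh (3*t))
          + ((x/2) * (Real.exp (-x * Real.cosh t) * Real.cosh t)
            + 2 * (Real.exp (-x * Real.cosh t) * Real.cosh (2*t)))) from
      setIntegral_congr_fun measurableSet_Ioi (fun t _ => heq t)]
    have iA := (integ3 hx).const_mul (-(x/2))
    have iB := (integ1 hx).const_mul (x/2)
    have iC := (integ2 hx).const_mul 2
    have iBC : Integrable (fun t : ℝ => x/2 * (Real.exp (-x * Real.cosh t) * Real.cosh t)
        + 2 * (Real.exp (-x * Real.cosh t) * Real.cosh (2*t))) (volume.restrict (Set.Ioi 0)) :=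
      iB.add iC
    rw [integral_add iA iBC, integral_add iB iC,
      integral_const_mul, integral_const_mul, integral_const_mul,
      ← besselK_one_eq, ← besselK_two_eq, ← besselK_three_eq]
  rw [hsplit, hg0] at h0
  linarith

lemma besselK_two_hasDerivAt {x : ℝ} (hx : 0 < x) :
    HasDerivAt (besselK 2) (-(besselK 1 x + besselK 3 x) / 2) x := by
  have h := besselK_hasDerivAt 2 hx
  have heq : ∀ t : ℝ, Real.cosh t * (Real.exp (-x * Real.cosh t) * Real.cosh ((2:ℕ) * t))
      = (1/2) * (Real.exp (-x * Real.cosh t) * Real.cosh (3*t))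
        + (1/2) * (Real.exp (-x * Real.cosh t) * Real.cosh t) := by
    intro t
    have h2 := cosh_mul_cosh_two t
    push_cast
    linear_combination Real.exp (-x * Real.cosh t) * h2
  have hs : (∫ t in Set.Ioi (0:ℝ), Real.cosh t * (Real.exp (-x * Real.cosh t) * Real.cosh ((2:ℕ) * t)))
      = (1/2) * besselK 3 x + (1/2) * besselK 1 x := by
    rw [setIntegral_congr_fun measurableSet_Ioi (fun t _ => heq t)]
    have i3 := (integ3 hx).const_mul (1/2 : ℝ)
    have i1 := (integ1 hx).const_mul (1/2 : ℝ)
    rw [integral_add i3 i1, integral_const_mul, integral_const_mul,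
      ← besselK_one_eq, ← besselK_three_eq]
  rw [hs] at h
  convert h using 1
  ring

lemma besselK_continuousOn (n : ℕ) : ContinuousOn (besselK n) (Set.Ioi 0) :=
  fun _ hx => (besselK_hasDerivAt n hx).continuousAt.continuousWithinAt

lemma moment_integrable (n : ℕ) (hn : n ≤ 2) {p : ℝ} (hp : 1 < p) :
    IntegrableOn (fun s : ℝ => s ^ p * besselK n s) (Set.Ioi 0) := by
  have hcont : ContinuousOn (fun s : ℝ => s ^ p * besselK n s) (Set.Ioi 0) := by
    apply ContinuousOn.mul _ (besselK_continuousOn n)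
    intro s hs
    exact (Real.continuousAt_rpow_const s p (Or.inl (ne_of_gt hs))).continuousWithinAt
  rw [show Set.Ioi (0:ℝ) = Set.Ioc 0 1 ∪ Set.Ioi 1 from (Set.Ioc_union_Ioi_eq_Ioi zero_le_one).symm]
  apply IntegrableOn.union
  · -- on (0, 1]
    have hbnd : IntegrableOn (fun s : ℝ => 2 * s ^ (p-1) + 4 * s ^ (p-2)) (Set.Ioc 0 1) := by
      have h1 : IntegrableOn (fun s : ℝ => s ^ (p-1)) (Set.Ioc 0 1) := by
        have := intervalIntegral.intervalIntegrable_rpow' (a := 0) (b := 1)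
          (show (-1:ℝ) < p - 1 by linarith)
        rwa [intervalIntegrable_iff_integrableOn_Ioc_of_le zero_le_one] at this
      have h2 : IntegrableOn (fun s : ℝ => s ^ (p-2)) (Set.Ioc 0 1) := by
        have := intervalIntegral.intervalIntegrable_rpow' (a := 0) (b := 1)
          (show (-1:ℝ) < p - 2 by linarith)
        rwa [intervalIntegrable_iff_integrableOn_Ioc_of_le zero_le_one] at this
      exact (h1.const_mul 2).add (h2.const_mul 4)
    apply Integrable.mono' hbnd
    · exact (hcont.mono (Set.Ioc_subset_Ioi_self)).aestronglyMeasurable measurableSet_Ioc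
    · filter_upwards [self_mem_ae_restrict measurableSet_Ioc] with s hs
      have hs0 : (0:ℝ) < s := hs.1
      have hK := besselK_pos n hs0
      rw [Real.norm_eq_abs, abs_of_pos (by positivity)]
      have hb : besselK n s ≤ 2/s + 4/s^2 := by
        calc besselK n s ≤ besselK 2 s := besselK_mono_ord hn hs0
          _ ≤ 2/s + 4/s^2 := besselK_two_bound hs0
      calc s ^ p * besselK n s ≤ s ^ p * (2/s + 4/s^2) := by
            apply mul_le_mul_of_nonneg_left hb (Real.rpow_nonneg hs0.le p)
        _ = 2 * s ^ (p-1) + 4 * s ^ (p-2) := by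
            rw [Real.rpow_sub hs0, Real.rpow_sub hs0, Real.rpow_one,
              show (2:ℝ) = ((2:ℕ):ℝ) by norm_num, Real.rpow_natCast]
            field_simp
  · -- on (1, ∞)
    have hbnd : IntegrableOn (fun s : ℝ => besselK n (1/2) * (s ^ p * Real.exp (-(1/2) * s)))
        (Set.Ioi 1) := by
      have h1 : IntegrableOn (fun s : ℝ => s ^ p * Real.exp (-(1/2) * s ^ (1:ℝ))) (Set.Ioi 0) :=
        integrableOn_rpow_mul_exp_neg_mul_rpow (by linarith) (by norm_num) (by norm_num)
      have h2 : IntegrableOn (fun s : ℝ => s ^ p * Real.exp (-(1/2) * s)) (Set.Ioi 0) := by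
        apply h1.congr_fun _ measurableSet_Ioi
        intro s hs
        simp only []
        rw [Real.rpow_one]
      exact ((h2.mono_set (Set.Ioi_subset_Ioi zero_le_one)).const_mul _)
    apply Integrable.mono' hbnd
    · exact (hcont.mono (Set.Ioi_subset_Ioi zero_le_one |>.trans (by
        intro s hs; exact hs))).aestronglyMeasurable measurableSet_Ioi
    · filter_upwards [self_mem_ae_restrict measurableSet_Ioi] with s hs
      have hs1 : (1:ℝ) < s := hs
      have hs0 : (0:ℝ) < s := by linarith
      have hK := besselK_pos n hs0
      rw [Real.norm_eq_abs, abs_of_pos (by positivity)]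
      have hb : besselK n s ≤ Real.exp (-(1/2) * s) * besselK n (1/2) := by
        calc besselK n s ≤ Real.exp (-(s/2)) * besselK n (s/2) := besselK_le_exp_mul n hs0
          _ ≤ Real.exp (-(1/2) * s) * besselK n (1/2) := by
              apply mul_le_mul _ (besselK_antitone n (by norm_num) (by linarith)) (besselK_pos n (by linarith)).le (Real.exp_pos _).le
              apply Real.exp_le_exp.mpr; linarith
      calc s ^ p * besselK n s ≤ s ^ p * (Real.exp (-(1/2) * s) * besselK n (1/2)) :=
            mul_le_mul_of_nonneg_left hb (Real.rpow_nonneg hs0.le p)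
        _ = besselK n (1/2) * (s ^ p * Real.exp (-(1/2) * s)) := by ring

lemma F_hasDerivAt {a : ℝ} (ha : 2 < a) {s : ℝ} (hs : 0 < s) :
    HasDerivAt (fun s : ℝ => s ^ a * besselK 2 s)
      ((a-2) * (s ^ (a-1) * besselK 2 s) - s ^ a * besselK 1 s) s := by
  have hr : HasDerivAt (fun s : ℝ => s ^ a) (a * s ^ (a-1)) s :=
    Real.hasDerivAt_rpow_const (Or.inl hs.ne')
  have hK := besselK_two_hasDerivAt hs
  have h := hr.mul hK
  refine h.congr_deriv ?_
  symm
  have hrec := besselK_recurrence hs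
  have hsa : s ^ a = s ^ (a-1) * s := by
    rw [← Real.rpow_add_one hs.ne' (a-1)]; norm_num
  rw [hsa]
  linear_combination (s^(a-1)/2) * hrec

lemma key_identity {a : ℝ} (ha : 2 < a) :
    ∫ s in Set.Ioi (0:ℝ), s ^ a * besselK 1 s
      = (a - 2) * ∫ s in Set.Ioi (0:ℝ), s ^ (a-1) * besselK 2 s := by
  have hI2 : IntegrableOn (fun s : ℝ => s ^ (a-1) * besselK 2 s) (Set.Ioi 0) :=
    moment_integrable 2 le_rfl (by linarith)
  have hI1 : IntegrableOn (fun s : ℝ => s ^ a * besselK 1 s) (Set.Ioi 0) :=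
    moment_integrable 1 (by norm_num) (by linarith)
  set F : ℝ → ℝ := fun s => s ^ a * besselK 2 s with hFdef
  have hF'int : IntegrableOn
      (fun s : ℝ => (a-2) * (s ^ (a-1) * besselK 2 s) - s ^ a * besselK 1 s) (Set.Ioi 0) :=
    (hI2.const_mul _).sub hI1
  -- limit at 0+
  have hF0 : Tendsto F (nhdsWithin 0 (Set.Ioi 0)) (𝓝 0) := by
    have hb : Tendsto (fun s : ℝ => 2 * s ^ (a-1) + 4 * s ^ (a-2)) (nhdsWithin 0 (Set.Ioi 0)) (𝓝 0) := by
      have h1 : Tendsto (fun s : ℝ => s ^ (a-1)) (𝓝 0) (𝓝 0) := by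
        have := (Real.continuousAt_rpow_const 0 (a-1) (Or.inr (by linarith))).tendsto
        simpa [Real.zero_rpow (show a-1 ≠ 0 by intro h; linarith [h])] using this
      have h2 : Tendsto (fun s : ℝ => s ^ (a-2)) (𝓝 0) (𝓝 0) := by
        have := (Real.continuousAt_rpow_const 0 (a-2) (Or.inr (by linarith))).tendsto
        simpa [Real.zero_rpow (show a-2 ≠ 0 by intro h; linarith [h])] using this
      have := ((h1.const_mul 2).add (h2.const_mul 4)).mono_left
        (nhdsWithin_le_nhds : nhdsWithin (0:ℝ) (Set.Ioi 0) ≤ 𝓝 0)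
      simpa using this
    apply squeeze_zero' _ _ hb
    · filter_upwards [self_mem_nhdsWithin] with s hs
      have h := (besselK_pos 2 (show (0:ℝ) < s from hs)).le
      simp only [hFdef]
      exact mul_nonneg (Real.rpow_nonneg (le_of_lt hs) a) h
    · filter_upwards [self_mem_nhdsWithin] with s hs
      have hs0 : (0:ℝ) < s := hs
      calc F s ≤ s ^ a * (2/s + 4/s^2) :=
            mul_le_mul_of_nonneg_left (besselK_two_bound hs0) (Real.rpow_nonneg hs0.le a)
        _ = 2 * s ^ (a-1) + 4 * s ^ (a-2) := by
            rw [Real.rpow_sub hs0, Real.rpow_sub hs0, Real.rpow_one,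
              show (2:ℝ) = ((2:ℕ):ℝ) by norm_num, Real.rpow_natCast]
            field_simp
  -- limit at ∞
  have hFtop : Tendsto F atTop (𝓝 0) := by
    have h1 : Tendsto (fun s : ℝ => besselK 2 (1/2) * (s ^ a * Real.exp (-(1/2) * s))) atTop
        (𝓝 (besselK 2 (1/2) * 0)) :=
      (tendsto_rpow_mul_exp_neg_mul_atTop_nhds_zero a (1/2) (by norm_num)).const_mul _
    rw [mul_zero] at h1
    apply squeeze_zero_norm' _ h1
    filter_upwards [eventually_ge_atTop (1:ℝ)] with s hs1
    have hs0 : (0:ℝ) < s := by linarith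
    have hb : besselK 2 s ≤ Real.exp (-(1/2) * s) * besselK 2 (1/2) := by
      calc besselK 2 s ≤ Real.exp (-(s/2)) * besselK 2 (s/2) := besselK_le_exp_mul 2 hs0
        _ ≤ Real.exp (-(1/2) * s) * besselK 2 (1/2) := by
            apply mul_le_mul _ (besselK_antitone 2 (by norm_num) (by linarith))
              (besselK_pos 2 (by linarith)).le (Real.exp_pos _).le
            apply Real.exp_le_exp.mpr; linarith
    rw [Real.norm_eq_abs,
      abs_of_nonneg (mul_nonneg (Real.rpow_nonneg hs0.le a) (besselK_pos 2 hs0).le)]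
    calc F s ≤ s ^ a * (Real.exp (-(1/2) * s) * besselK 2 (1/2)) :=
          mul_le_mul_of_nonneg_left hb (Real.rpow_nonneg hs0.le a)
      _ = besselK 2 (1/2) * (s ^ a * Real.exp (-(1/2) * s)) := by ring
  -- FTC
  have hcont : ContinuousWithinAt F (Set.Ici 0) 0 := by
    have hF00 : F 0 = 0 := by
      simp [hFdef, Real.zero_rpow (show a ≠ 0 by intro h; linarith [h])]
    apply continuousWithinAt_Ioi_iff_Ici.mp
    rw [ContinuousWithinAt, hF00]
    exact hF0
  have hkey : ∫ s in Set.Ioi (0:ℝ),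
      ((a-2) * (s ^ (a-1) * besselK 2 s) - s ^ a * besselK 1 s) = 0 - F 0 :=
    integral_Ioi_of_hasDerivAt_of_tendsto hcont (fun s hs => F_hasDerivAt ha hs) hF'int hFtop
  have hF00 : F 0 = 0 := by
    simp [hFdef, Real.zero_rpow (show a ≠ 0 by intro h; linarith [h])]
  rw [hF00, sub_zero] at hkey
  rw [integral_sub (hI2.const_mul _) hI1, integral_const_mul] at hkey
  linarith

lemma tendsto_cut (f : ℝ → ℝ) (hf_cont : ContinuousOn f (Set.Ioi 0))
    (hf_nonneg : ∀ s : ℝ, 0 < s → 0 ≤ f s) {a : ℝ} (ha : 0 < a)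
    (hint : IntegrableOn (fun s : ℝ => f s * s ^ a) (Set.Ioi 0)) :
    Tendsto (fun γ : ℝ => ∫ s in Set.Ioi γ, f s * (s - γ) ^ a) (nhdsWithin 0 (Set.Ioi 0))
      (𝓝 (∫ s in Set.Ioi (0:ℝ), f s * s ^ a)) := by
  have hrpow_cont : ∀ γ : ℝ, Continuous (fun s : ℝ => (s - γ) ^ a) := by
    intro γ
    rw [continuous_iff_continuousAt]
    intro s
    exact (continuousAt_id.sub continuousAt_const).rpow_const (Or.inr ha.le)
  have key : Tendsto (fun γ : ℝ => ∫ s in Set.Ioi (0:ℝ),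
      Set.indicator (Set.Ioi γ) (fun s => f s * (s - γ) ^ a) s) (nhdsWithin 0 (Set.Ioi 0))
      (𝓝 (∫ s in Set.Ioi (0:ℝ), f s * s ^ a)) := by
    apply tendsto_integral_filter_of_dominated_convergence (fun s : ℝ => f s * s ^ a)
    · filter_upwards with γ
      exact ((hf_cont.mul (hrpow_cont γ).continuousOn).aestronglyMeasurable
        measurableSet_Ioi).indicator measurableSet_Ioi
    · filter_upwards [self_mem_nhdsWithin] with γ hγ
      filter_upwards [self_mem_ae_restrict measurableSet_Ioi] with s hs
      have hs0 : (0:ℝ) < s := hs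
      have hγ0 : (0:ℝ) < γ := hγ
      by_cases h : s ∈ Set.Ioi γ
      · rw [Set.indicator_of_mem h]
        have hsγ : (0:ℝ) ≤ s - γ := by
          have : γ < s := h
          linarith
        rw [Real.norm_eq_abs, abs_of_nonneg (mul_nonneg (hf_nonneg s hs0)
          (Real.rpow_nonneg hsγ a))]
        apply mul_le_mul_of_nonneg_left _ (hf_nonneg s hs0)
        exact Real.rpow_le_rpow hsγ (by linarith) ha.le
      · rw [Set.indicator_of_notMem h]
        simp only [norm_zero]
        exact mul_nonneg (hf_nonneg s hs0) (Real.rpow_nonneg hs0.le a)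
    · exact hint
    · filter_upwards [self_mem_ae_restrict measurableSet_Ioi] with s hs
      have hs0 : (0:ℝ) < s := hs
      have h1 : Tendsto (fun γ : ℝ => f s * (s - γ) ^ a) (𝓝 0) (𝓝 (f s * s ^ a)) := by
        have h2 : Tendsto (fun γ : ℝ => (s - γ) ^ a) (𝓝 0) (𝓝 (s ^ a)) := by
          have h3 : ContinuousAt (fun γ : ℝ => (s - γ) ^ a) 0 :=
            (continuousAt_const.sub continuousAt_id).rpow_const (Or.inr ha.le)
          have := h3.tendsto
          simpa using this
        simpa using h2.const_mul (f s)
      apply Tendsto.congr' _ (h1.mono_left nhdsWithin_le_nhds)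
      filter_upwards [Ioo_mem_nhdsGT_of_mem (Set.left_mem_Ico.mpr hs0)] with γ hγ
      rw [Set.indicator_of_mem (Set.mem_Ioi.mpr hγ.2)]
  apply Tendsto.congr' _ key
  filter_upwards [self_mem_nhdsWithin] with γ hγ
  have hγ0 : (0:ℝ) < γ := hγ
  rw [integral_indicator measurableSet_Ioi, Measure.restrict_restrict measurableSet_Ioi,
    Set.inter_eq_left.mpr (Set.Ioi_subset_Ioi hγ0.le)]

/-- For `a > 2`, the energy-to-pressure ratio tends to `a + 1` in the
ultrarelativistic limit `γ → 0⁺`. -/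
theorem ultrarelativistic_limit_ratio_large_a (a : ℝ) (ha : 2 < a) :
    Filter.Tendsto (fun γ : ℝ => rRatio γ a) (nhdsWithin 0 (Set.Ioi 0)) (nhds (a + 1)) := by
  have ha0 : (0:ℝ) < a := by linarith
  have hI2 : IntegrableOn (fun s : ℝ => s ^ (a-1) * besselK 2 s) (Set.Ioi 0) :=
    moment_integrable 2 le_rfl (by linarith)
  have hI1 : IntegrableOn (fun s : ℝ => s ^ a * besselK 1 s) (Set.Ioi 0) :=
    moment_integrable 1 (by norm_num) (by linarith)
  set fd : ℝ → ℝ := fun s => besselK 2 s / s with hfd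
  set fn : ℝ → ℝ := fun s => besselK 1 s + 3 * (besselK 2 s / s) with hfn
  have hfd_cont : ContinuousOn fd (Set.Ioi 0) :=
    (besselK_continuousOn 2).div continuousOn_id (fun s hs => ne_of_gt hs)
  have hfn_cont : ContinuousOn fn (Set.Ioi 0) :=
    (besselK_continuousOn 1).add (continuousOn_const.mul hfd_cont)
  have hfd_nonneg : ∀ s : ℝ, 0 < s → 0 ≤ fd s :=
    fun s hs => div_nonneg (besselK_pos 2 hs).le hs.le
  have hfn_nonneg : ∀ s : ℝ, 0 < s → 0 ≤ fn s := by
    intro s hs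
    have := (besselK_pos 1 hs).le
    have := hfd_nonneg s hs
    simp only [hfn]
    have h3 : (0:ℝ) ≤ 3 * (besselK 2 s / s) := by
      apply mul_nonneg (by norm_num)
      exact div_nonneg (besselK_pos 2 hs).le hs.le
    linarith
  -- identification of the limit integrands
  have hd_eq : ∀ s ∈ Set.Ioi (0:ℝ), fd s * s ^ a = s ^ (a-1) * besselK 2 s := by
    intro s hs
    have hs0 : (0:ℝ) < s := hs
    rw [Real.rpow_sub hs0, Real.rpow_one, hfd]
    field_simp
  have hn_eq : ∀ s ∈ Set.Ioi (0:ℝ), fn s * s ^ a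
      = s ^ a * besselK 1 s + 3 * (s ^ (a-1) * besselK 2 s) := by
    intro s hs
    have hs0 : (0:ℝ) < s := hs
    have := hd_eq s hs
    simp only [hfn]
    nlinarith [this]
  have hd_int : IntegrableOn (fun s : ℝ => fd s * s ^ a) (Set.Ioi 0) :=
    hI2.congr_fun (fun s hs => (hd_eq s hs).symm) measurableSet_Ioi
  have hn_int : IntegrableOn (fun s : ℝ => fn s * s ^ a) (Set.Ioi 0) := by
    have h : IntegrableOn (fun s : ℝ => s ^ a * besselK 1 s + 3 * (s ^ (a-1) * besselK 2 s))
        (Set.Ioi 0) := hI1.add (hI2.const_mul 3)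
    exact h.congr_fun (fun s hs => (hn_eq s hs).symm) measurableSet_Ioi
  set D0 : ℝ := ∫ s in Set.Ioi (0:ℝ), fd s * s ^ a with hD0
  set N0 : ℝ := ∫ s in Set.Ioi (0:ℝ), fn s * s ^ a with hN0
  have hD0' : D0 = ∫ s in Set.Ioi (0:ℝ), s ^ (a-1) * besselK 2 s := by
    rw [hD0]; exact setIntegral_congr_fun measurableSet_Ioi hd_eq
  have hN0val : N0 = (a+1) * D0 := by
    rw [hN0, setIntegral_congr_fun measurableSet_Ioi hn_eq,
      integral_add hI1 (hI2.const_mul 3), integral_const_mul, key_identity ha, hD0']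
    ring
  have hD0pos : 0 < D0 := by
    rw [hD0, setIntegral_pos_iff_support_of_nonneg_ae]
    · apply lt_of_lt_of_le _ (measure_mono (Set.inter_subset_inter_left _
        (subset_refl _)))
      · rw [Set.inter_eq_right.mpr]
        · simp [Real.volume_Ioi]
        · intro s hs
          have hs0 : (0:ℝ) < s := hs
          simp only [Function.mem_support]
          have h1 := besselK_pos 2 hs0
          exact ne_of_gt (mul_pos (div_pos h1 hs0) (Real.rpow_pos_of_pos hs0 a))
    · filter_upwards [self_mem_ae_restrict measurableSet_Ioi] with s hs
      exact mul_nonneg (hfd_nonneg s hs) (Real.rpow_nonneg (le_of_lt hs) a)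
    · exact hd_int
  have hDten := tendsto_cut fd hfd_cont hfd_nonneg ha0 hd_int
  have hNten := tendsto_cut fn hfn_cont hfn_nonneg ha0 hn_int
  have hdiv := hNten.div hDten (ne_of_gt hD0pos)
  have hval : N0 / D0 = a + 1 := by
    rw [hN0val, mul_div_assoc, div_self (ne_of_gt hD0pos), mul_one]
  rw [hval] at hdiv
  apply Tendsto.congr' _ hdiv
  filter_upwards [self_mem_nhdsWithin] with γ hγ
  have hγ0 : (0:ℝ) < γ := hγ
  simp only [Pi.div_apply, rRatio, hfn, hfd]
  congr 1
  apply setIntegral_congr_fun measurableSet_Ioi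
  intro s hs
  have hs0 : (0:ℝ) < s := lt_trans hγ0 hs
  have hrec := besselK_recurrence hs0
  have heq : besselK 1 s + 3 * (besselK 2 s / s) = besselK 3 s - besselK 2 s / s := by
    field_simp
    linarith
  linear_combination ((s - γ) ^ a) * heq
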